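/- Let x be a central configuration of dimension n−2. If (Δ_0, Δ_1, …, Δ_n) is a nonzero vector belonging to the kernel of the Cayley–Menger matrix A(x), then there exists a unique nonzero constant α such that F_{ij} = α Δ_i Δ_j for all 0 ≤ i, j ≤ n, where F_{ij} denotes the (i,j) cofactor of A(x). Moreover, at least two of the numbers Δ_1, …, Δ_n are nonzero. -/

import Mathlib

/-- The dimension of a configuration: the dimension of the smallest affine
subspace containing the points. -/
noncomputable def confDim {d n : ℕ} (x : Fin n → EuclideanSpace ℝ (Fin d)) : ℕ :=
  Module.finrank ℝ (affineSpan ℝ (Set.range x)).direction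

/-- `x` is a central configuration for the potential `U_a` (with `c2 = 2a ∈ ℤ`),
masses `m`, and multiplier `lam`. -/
def IsCentralConfig {d n : ℕ} (c2 : ℤ) (m : Fin n → ℝ) (lam : ℝ)
    (x : Fin n → EuclideanSpace ℝ (Fin d)) : Prop :=
  ∀ j : Fin n,
    (∑ i ∈ Finset.univ \ {j}, (m i * dist (x i) (x j) ^ c2) • (x i - x j))
      + lam • (x j - (∑ i, m i)⁻¹ • ∑ i, m i • x i) = 0

/-- The Cayley–Menger matrix of a configuration. -/
noncomputable def cayleyMenger {n d : ℕ} (x : Fin n → EuclideanSpace ℝ (Fin d)) :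
    Matrix (Fin (n + 1)) (Fin (n + 1)) ℝ :=
  Matrix.of fun i j =>
    Fin.cases (Fin.cases 0 (fun _ => 1) j)
      (fun i' => Fin.cases 1 (fun j' => dist (x i') (x j') ^ 2) j) i

section Aux
open Matrix

variable {n d : ℕ} (x : Fin n → EuclideanSpace ℝ (Fin d))

lemma cm00 : cayleyMenger x 0 0 = 0 := by simp [cayleyMenger]
lemma cm0s (j : Fin n) : cayleyMenger x 0 j.succ = 1 := by simp [cayleyMenger]
lemma cms0 (i : Fin n) : cayleyMenger x i.succ 0 = 1 := by simp [cayleyMenger]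
lemma cmss (i j : Fin n) : cayleyMenger x i.succ j.succ = dist (x i) (x j) ^ 2 := by
  simp [cayleyMenger]

lemma cmsymm : (cayleyMenger x)ᵀ = cayleyMenger x := by
  ext i j
  rw [Matrix.transpose_apply]
  refine Fin.cases ?_ (fun i' => ?_) i <;> refine Fin.cases ?_ (fun j' => ?_) j <;>
    simp [cm00, cm0s, cms0, cmss, dist_comm]

open Finset in
lemma ker_row0 (u : Fin (n+1) → ℝ) (hu : (cayleyMenger x).mulVec u = 0) :
    ∑ j : Fin n, u j.succ = 0 := by
  have h0 := congrFun hu 0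
  simp only [Matrix.mulVec, dotProduct, Fin.sum_univ_succ, cm00, cm0s,
    Pi.zero_apply, zero_mul, one_mul, zero_add] at h0
  exact h0

open Finset in
lemma ker_rows (u : Fin (n+1) → ℝ) (hu : (cayleyMenger x).mulVec u = 0) (i : Fin n) :
    u 0 + ∑ j, dist (x i) (x j) ^ 2 * u j.succ = 0 := by
  have h0 := congrFun hu i.succ
  simp only [Matrix.mulVec, dotProduct, Fin.sum_univ_succ, cms0, cmss,
    Pi.zero_apply, one_mul] at h0
  exact h0

lemma ker_w_zero (u : Fin (n+1) → ℝ) (hu : (cayleyMenger x).mulVec u = 0) :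
    ∑ j : Fin n, u j.succ • x j = 0 := by
  set w : EuclideanSpace ℝ (Fin d) := ∑ j, u j.succ • x j with hw
  have hsum := ker_row0 x u hu
  set Q : ℝ := ∑ j, u j.succ * ‖x j‖ ^ 2 with hQ
  have hinner : ∀ i, 2 * (inner ℝ (x i) w : ℝ) = u 0 + Q := by
    intro i
    have hr := ker_rows x u hu i
    have hexp : ∀ j, dist (x i) (x j) ^ 2 * u j.succ
        = ‖x i‖ ^ 2 * u j.succ + u j.succ * ‖x j‖ ^ 2
          - 2 * ((inner ℝ (x i) (x j) : ℝ) * u j.succ) := by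
      intro j
      rw [dist_eq_norm, norm_sub_sq_real]
      ring
    rw [Finset.sum_congr rfl fun j _ => hexp j] at hr
    simp only [Finset.sum_sub_distrib, Finset.sum_add_distrib, ← Finset.mul_sum] at hr
    have hiw : (inner ℝ (x i) w : ℝ) = ∑ j, (inner ℝ (x i) (x j) : ℝ) * u j.succ := by
      rw [hw, inner_sum]
      exact Finset.sum_congr rfl fun j _ => by rw [real_inner_smul_right]; ring
    rw [hsum, mul_zero, ← hQ, ← hiw] at hr
    linarith
  have hww : (inner ℝ w w : ℝ) = 0 := by
    rw [hw, sum_inner]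
    have : ∀ j : Fin n, j ∈ Finset.univ → (inner ℝ (u j.succ • x j) w : ℝ) = u j.succ * ((u 0 + Q)/2) := by
      intro j _
      rw [real_inner_smul_left]
      have := hinner j
      have : (inner ℝ (x j) w : ℝ) = (u 0 + Q)/2 := by linarith
      rw [this]
    rw [Finset.sum_congr rfl this, ← Finset.sum_mul, hsum, zero_mul]
  exact inner_self_eq_zero.mp hww

lemma ker_first (hn : 1 ≤ n) (u : Fin (n+1) → ℝ) (hu : (cayleyMenger x).mulVec u = 0)
    (h : ∀ j : Fin n, u j.succ = 0) : u = 0 := by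
  have hr := ker_rows x u hu ⟨0, hn⟩
  simp only [h, mul_zero, Finset.sum_const_zero, add_zero] at hr
  funext k
  refine Fin.cases ?_ (fun k' => ?_) k
  · simpa using hr
  · simpa using h k'


lemma ker_char (hn : 2 ≤ n) (hdim : confDim x = n - 2)
    (Δ : Fin (n+1) → ℝ) (hΔ : Δ ≠ 0) (hker : (cayleyMenger x).mulVec Δ = 0) :
    ∀ u : Fin (n+1) → ℝ, (cayleyMenger x).mulVec u = 0 → ∃ t : ℝ, u = t • Δ := by
  have hn1 : 1 ≤ n := by omega
  set i0 : Fin n := ⟨0, hn1⟩ with hi0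
  set y : Fin n → EuclideanSpace ℝ (Fin d) := fun i => x i - x i0 with hy
  set B := Fintype.linearCombination ℝ y with hB
  -- finrank of span of y is n - 2
  have hspan : Module.finrank ℝ (Submodule.span ℝ (Set.range y)) = n - 2 := by
    rw [← hdim]
    unfold confDim
    rw [direction_affineSpan, vectorSpan_range_eq_span_range_vsub_right ℝ x i0]
    simp only [vsub_eq_sub]
    rfl
  have hrange : LinearMap.range B = Submodule.span ℝ (Set.range y) :=
    Fintype.range_linearCombination ℝ y
  have hrk := LinearMap.finrank_range_add_finrank_ker B
  rw [hrange, hspan] at hrk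
  have hpi : Module.finrank ℝ (Fin n → ℝ) = n := by
    simp [Module.finrank_pi]
  rw [hpi] at hrk
  have hkerB : Module.finrank ℝ (LinearMap.ker B) = 2 := by omega
  -- the sum functional
  set S := Fintype.linearCombination ℝ (fun _ : Fin n => (1:ℝ)) with hS
  have hSapp : ∀ v : Fin n → ℝ, S v = ∑ j, v j := by
    intro v
    rw [hS, Fintype.linearCombination_apply]
    simp
  -- e0
  set e0 : Fin n → ℝ := Pi.single i0 1 with he0
  have he0B : B e0 = 0 := by
    rw [hB, he0, Fintype.linearCombination_apply_single]
    simp [hy]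
  have he0S : S e0 = 1 := by
    rw [hS, he0, Fintype.linearCombination_apply_single]
    simp
  -- elements of ker of CM give elements of ker B ∩ ker S
  have hmem : ∀ u : Fin (n+1) → ℝ, (cayleyMenger x).mulVec u = 0 →
      B (fun j => u j.succ) = 0 ∧ S (fun j => u j.succ) = 0 := by
    intro u hu
    have hsum := ker_row0 x u hu
    have hw := ker_w_zero x u hu
    constructor
    · rw [hB, Fintype.linearCombination_apply]
      simp only [hy, smul_sub]
      rw [Finset.sum_sub_distrib, hw, ← Finset.sum_smul, hsum, zero_smul, sub_zero]
    · rw [hSapp]; exact hsum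
  -- v := Δ ∘ succ is nonzero
  set v : Fin n → ℝ := fun j => Δ j.succ with hv
  have hvB : B v = 0 := (hmem Δ hker).1
  have hvS : S v = 0 := (hmem Δ hker).2
  have hvne : v ≠ 0 := by
    intro h0
    exact hΔ (ker_first x hn1 Δ hker fun j => congrFun h0 j)
  -- v and e0 are linearly independent
  have hli : LinearIndependent ℝ ![v, e0] := by
    rw [LinearIndependent.pair_iff]
    intro s t hst
    have h1 : S (s • v + t • e0) = 0 := by rw [hst]; simp
    rw [map_add, _root_.map_smul, _root_.map_smul, hvS, he0S, smul_eq_mul, smul_eq_mul, mul_zero,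
      mul_one, zero_add] at h1
    subst h1
    simp only [zero_smul, add_zero] at hst
    rcases smul_eq_zero.mp hst with h | h
    · exact ⟨h, rfl⟩
    · exact absurd h hvne
  -- span {v, e0} = ker B
  have hpair : Set.range ![v, e0] = ({v, e0} : Set (Fin n → ℝ)) := by
    ext z
    simp [Fin.exists_fin_two, or_comm]
  have hle : Submodule.span ℝ (Set.range ![v, e0]) ≤ LinearMap.ker B := by
    rw [Submodule.span_le, hpair]
    intro z hz
    simp only [Set.mem_insert_iff, Set.mem_singleton_iff] at hz
    rcases hz with rfl | rfl
    · exact LinearMap.mem_ker.mpr hvB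
    · exact LinearMap.mem_ker.mpr he0B
  have heq : Submodule.span ℝ (Set.range ![v, e0]) = LinearMap.ker B := by
    apply Submodule.eq_of_le_of_finrank_eq hle
    rw [finrank_span_eq_card hli, hkerB]
    simp
  -- conclude
  intro u hu
  obtain ⟨huB, huS⟩ := hmem u hu
  have humem : (fun j => u j.succ) ∈ Submodule.span ℝ (Set.range ![v, e0]) := by
    rw [heq]; exact huB
  rw [hpair] at humem
  obtain ⟨a, b, hab⟩ := Submodule.mem_span_pair.mp humem
  have hb : b = 0 := by
    have h1 := congrArg S hab
    rw [map_add, _root_.map_smul, _root_.map_smul, hvS, smul_eq_mul, smul_eq_mul, mul_zero,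
      he0S, mul_one, zero_add, huS] at h1
    exact h1
  subst hb
  simp only [zero_smul, add_zero] at hab
  refine ⟨a, ?_⟩
  have hz : (cayleyMenger x).mulVec (u - a • Δ) = 0 := by
    rw [Matrix.mulVec_sub, Matrix.mulVec_smul, hu, hker, smul_zero, sub_zero]
  have hzsucc : ∀ j : Fin n, (u - a • Δ) j.succ = 0 := by
    intro j
    have := congrFun hab j
    simp only [hv, Pi.smul_apply, smul_eq_mul] at this
    simp [Pi.sub_apply, Pi.smul_apply, smul_eq_mul, ← this]
  exact sub_eq_zero.mp (ker_first x hn1 (u - a • Δ) hz hzsucc)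


end Aux

open Matrix in
/-- Let `x` be a central configuration of dimension `n−2`. If
`(Δ_0, Δ_1, …, Δ_n)` is a nonzero vector in the kernel of `A(x)`, then there exists a
unique nonzero constant `α` such that the `(i,j)` cofactor of `A(x)` (i.e. the `(j,i)`
entry of the adjugate) equals `α Δ_i Δ_j` for all `0 ≤ i, j ≤ n`. Moreover at least two
of `Δ_1, …, Δ_n` are nonzero. -/
theorem statement7 {n d : ℕ} (hn : 2 ≤ n)
    (x : Fin n → EuclideanSpace ℝ (Fin d)) (hinj : Function.Injective x)
    (m : Fin n → ℝ) (hM : ∑ i, m i ≠ 0) (c2 : ℤ) (hc2 : c2 ≠ 0)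
    (lam : ℝ) (hlam : lam ≠ 0) (hcc : IsCentralConfig c2 m lam x)
    (hdim : confDim x = n - 2)
    (Δ : Fin (n + 1) → ℝ) (hΔ : Δ ≠ 0)
    (hker : (cayleyMenger x).mulVec Δ = 0) :
    (∃! α : ℝ, α ≠ 0 ∧ ∀ i j : Fin (n + 1),
        (cayleyMenger x).adjugate j i = α * Δ i * Δ j) ∧
    ∃ i j : Fin n, i ≠ j ∧ Δ i.succ ≠ 0 ∧ Δ j.succ ≠ 0 := by
  have hn1 : 1 ≤ n := by omega
  set A := cayleyMenger x with hA
  have hsym : Aᵀ = A := cmsymm x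
  have hchar := ker_char x hn hdim Δ hΔ hker
  have hdet : A.det = 0 := Matrix.exists_mulVec_eq_zero_iff.mp ⟨Δ, hΔ, hker⟩
  obtain ⟨i1, hi1⟩ : ∃ i, Δ i ≠ 0 := Function.ne_iff.mp hΔ
  -- columns of adjugate are in the kernel
  have hcol : ∀ j, A.mulVec (fun i => A.adjugate i j) = 0 := by
    intro j
    funext i
    have : (A * A.adjugate) i j = 0 := by
      rw [Matrix.mul_adjugate, hdet, zero_smul]
      simp
    rw [Pi.zero_apply, ← this, Matrix.mul_apply]
    rfl
  choose t ht using fun j => hchar (fun i => A.adjugate i j) (hcol j)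
  have htij : ∀ i j, A.adjugate i j = t j * Δ i := by
    intro i j
    have := congrFun (ht j) i
    simpa using this
  -- adjugate is symmetric
  have hadjsym : ∀ i j, A.adjugate i j = A.adjugate j i := by
    intro i j
    have h1 : (A.adjugate)ᵀ = A.adjugate := by
      rw [Matrix.adjugate_transpose, hsym]
    exact (congrFun (congrFun h1 j) i).symm ▸ rfl
  -- the diagonal entry at i1 is nonzero
  have hdiag : A.adjugate i1 i1 ≠ 0 := by
    rw [Matrix.adjugate_apply]
    intro h
    obtain ⟨w, hwne, hw⟩ := Matrix.exists_mulVec_eq_zero_iff.mpr h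
    have hwi1 : w i1 = 0 := by
      have h2 := congrFun hw i1
      rwa [Pi.zero_apply, Matrix.mulVec, Matrix.updateRow_self,
        single_dotProduct, one_mul] at h2
    have hrows : ∀ j, j ≠ i1 → A.mulVec w j = 0 := by
      intro j hj
      have h2 := congrFun hw j
      rwa [Pi.zero_apply, Matrix.mulVec, Matrix.updateRow_ne hj] at h2
    have hdot : dotProduct Δ (A.mulVec w) = 0 := by
      rw [Matrix.dotProduct_mulVec]
      have hvm : Matrix.vecMul Δ A = 0 := by
        rw [← hsym, Matrix.vecMul_transpose, hker]
      rw [hvm, zero_dotProduct]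
    have hdot2 : dotProduct Δ (A.mulVec w) = Δ i1 * A.mulVec w i1 := by
      rw [dotProduct]
      exact Finset.sum_eq_single i1 (fun b _ hb => by rw [hrows b hb, mul_zero])
        (fun hbi => absurd (Finset.mem_univ i1) hbi)
    have hci1 : A.mulVec w i1 = 0 := by
      have := hdot2.symm.trans hdot
      exact (mul_eq_zero.mp this).resolve_left hi1
    have hAw : A.mulVec w = 0 := by
      funext j
      by_cases hj : j = i1
      · rw [hj, hci1]; rfl
      · rw [hrows j hj]; rfl
    obtain ⟨s, hs⟩ := hchar w hAw
    have : s * Δ i1 = 0 := by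
      have := congrFun hs i1
      simp only [Pi.smul_apply, smul_eq_mul] at this
      rw [← this, hwi1]
    rcases mul_eq_zero.mp this with h0 | h0
    · apply hwne
      rw [hs, h0, zero_smul]
    · exact hi1 h0
  have hti1 : t i1 ≠ 0 := by
    intro h0
    apply hdiag
    rw [htij, h0, zero_mul]
  set α := t i1 / Δ i1 with hα
  have hαne : α ≠ 0 := div_ne_zero hti1 hi1
  have htj : ∀ j, t j = α * Δ j := by
    intro j
    have h1 : t j * Δ i1 = t i1 * Δ j := by
      rw [← htij i1 j, hadjsym i1 j, htij j i1]
    rw [hα, div_mul_eq_mul_div, eq_div_iff hi1, h1, mul_comm]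
  have hmain : ∀ i j, A.adjugate j i = α * Δ i * Δ j := by
    intro i j
    rw [htij j i, htj i]
  constructor
  · refine ⟨α, ⟨hαne, hmain⟩, ?_⟩
    rintro β ⟨hβne, hβ⟩
    have h1 := (hβ i1 i1).symm.trans (hmain i1 i1)
    exact mul_right_cancel₀ hi1 (mul_right_cancel₀ hi1 h1)
  · -- at least two of Δ_1, ..., Δ_n are nonzero
    have hsum : ∑ j : Fin n, Δ j.succ = 0 := ker_row0 x Δ hker
    have hex : ∃ i : Fin n, Δ i.succ ≠ 0 := by
      by_contra h
      push_neg at h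
      exact hΔ (ker_first x hn1 Δ hker h)
    obtain ⟨i, hi⟩ := hex
    by_contra hcon
    push_neg at hcon
    have hothers : ∀ j : Fin n, j ≠ i → Δ j.succ = 0 := by
      intro j hj
      exact hcon i j (fun h => hj h.symm) hi
    have : ∑ j : Fin n, Δ j.succ = Δ i.succ :=
      Finset.sum_eq_single i (fun b _ hb => hothers b hb)
        (fun hbi => absurd (Finset.mem_univ i) hbi)
    rw [hsum] at this
    exact hi this.symm
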